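/- arXiv:2007.03043 — 7 statements merged into one kernel-verified Lean document; each statement's English description precedes it below -/
import Mathlib

section
/- With Λ as above, 1 - Λ(s·√φ(s))² = 4·φ(s)·(s·φ'(s) + φ(s)) / (s·φ'(s) + 2·φ(s))² for all s > 0, and consequently -1 < Λ(t) < 1 for all t > 0. -/
/-- With `Λ(t) = t·Θ'(t)/Θ(t)` as above,
`1 - Λ(s·√φ(s))² = 4·φ(s)·(s·φ'(s) + φ(s)) / (s·φ'(s) + 2·φ(s))²` for all `s > 0`,
and consequently `-1 < Λ(t) < 1` for all `t > 0`. -/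
theorem stmt_4 (φ ζ : ℝ → ℝ)
    (hφpos : ∀ s > (0:ℝ), 0 < φ s)
    (hC1 : ContDiffOn ℝ 1 φ (Set.Ioi 0))
    (hζC1 : ContDiffOn ℝ 1 ζ (Set.Ioi 0))
    (hderiv : ∀ s > (0:ℝ), 0 < deriv (fun u => u * φ u) s)
    (hrange : (fun s => s * φ s) '' Set.Ioi 0 = Set.Ioi 0)
    (hζpos : ∀ t > (0:ℝ), 0 < ζ t)
    (hζ1 : ∀ s > (0:ℝ), ζ (s * Real.sqrt (φ s)) = s)
    (hζ2 : ∀ t > (0:ℝ), ζ t * Real.sqrt (φ (ζ t)) = t)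
    (Λ : ℝ → ℝ)
    (hΛ : ∀ t > (0:ℝ), Λ t = t * deriv (fun u => ζ u / u) t / (ζ t / t)) :
    (∀ s > (0:ℝ),
      1 - (Λ (s * Real.sqrt (φ s))) ^ 2
        = 4 * φ s * (s * deriv φ s + φ s) / (s * deriv φ s + 2 * φ s) ^ 2) ∧
    (∀ t > (0:ℝ), -1 < Λ t ∧ Λ t < 1) := by
  -- differentiability of φ on the open set
  have hφd : ∀ s > (0:ℝ), DifferentiableAt ℝ φ s := fun s hs =>
    (hC1.differentiableOn one_ne_zero).differentiableAt (Ioi_mem_nhds hs)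
  have hζd : ∀ t > (0:ℝ), DifferentiableAt ℝ ζ t := fun t ht =>
    (hζC1.differentiableOn one_ne_zero).differentiableAt (Ioi_mem_nhds ht)
  have hsum : ∀ s > (0:ℝ), 0 < s * deriv φ s + φ s := by
    intro s hs
    have h1 : HasDerivAt (fun u => u * φ u) (1 * φ s + s * deriv φ s) s :=
      (hasDerivAt_id s).mul (hφd s hs).hasDerivAt
    have h2 := hderiv s hs
    rw [h1.deriv] at h2
    linarith
  have key : ∀ s > (0:ℝ), Λ (s * Real.sqrt (φ s)) =
      -(s * deriv φ s) / (s * deriv φ s + 2 * φ s) := by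
    intro s hs
    have hp : 0 < φ s := hφpos s hs
    have hsq : 0 < Real.sqrt (φ s) := Real.sqrt_pos.mpr hp
    set p := φ s with hpdef
    set p' := deriv φ s with hp'def
    have hA : 0 < s * p' + p := hsum s hs
    have hD : 0 < s * p' + 2 * p := by linarith
    set t := s * Real.sqrt p with htdef
    have ht : 0 < t := mul_pos hs hsq
    -- derivative of g u = u * sqrt (φ u)
    have hsqrt : HasDerivAt (fun u => Real.sqrt (φ u)) (p' / (2 * Real.sqrt p)) s :=
      (hφd s hs).hasDerivAt.sqrt hp.ne'
    have hg : HasDerivAt (fun u => u * Real.sqrt (φ u))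
        (1 * Real.sqrt p + s * (p' / (2 * Real.sqrt p))) s :=
      (hasDerivAt_id s).mul hsqrt
    -- chain rule for ζ ∘ g
    have hcomp : HasDerivAt (fun u => ζ (u * Real.sqrt (φ u)))
        (deriv ζ t * (1 * Real.sqrt p + s * (p' / (2 * Real.sqrt p)))) s :=
      (hζd t ht).hasDerivAt.comp s hg
    have heq : (fun u => ζ (u * Real.sqrt (φ u))) =ᶠ[nhds s] id := by
      filter_upwards [Ioi_mem_nhds hs] with u hu
      exact hζ1 u hu
    have hid : HasDerivAt (fun u => ζ (u * Real.sqrt (φ u))) 1 s :=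
      (hasDerivAt_id s).congr_of_eventuallyEq heq
    have hq : deriv ζ t * (1 * Real.sqrt p + s * (p' / (2 * Real.sqrt p))) = 1 :=
      hcomp.unique hid
    -- value of ζ at t
    have hζt : ζ t = s := hζ1 s hs
    -- derivative of ζ u / u at t
    have hdiv : HasDerivAt (fun u => ζ u / u)
        ((deriv ζ t * t - ζ t * 1) / t ^ 2) t :=
      (hζd t ht).hasDerivAt.div (hasDerivAt_id t) ht.ne'
    -- solve for deriv ζ t
    have hq' : deriv ζ t = 2 * Real.sqrt p / (s * p' + 2 * p) := by
      have h2 : (1 : ℝ) * Real.sqrt p + s * (p' / (2 * Real.sqrt p))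
          = (s * p' + 2 * p) / (2 * Real.sqrt p) := by
        have hss : Real.sqrt p * Real.sqrt p = p := Real.mul_self_sqrt hp.le
        field_simp
        linear_combination 2 * hss
      rw [h2] at hq
      field_simp at hq ⊢
      linarith [hq]
    rw [hΛ t ht, hdiv.deriv, hζt, hq']
    have hss : Real.sqrt p * Real.sqrt p = p := Real.mul_self_sqrt hp.le
    rw [htdef]
    have h2 : Real.sqrt p ^ 2 = p := Real.sq_sqrt hp.le
    field_simp
    ring_nf
    linear_combination 2 * h2
  constructor
  · intro s hs
    have hp := hφpos s hs
    have hA := hsum s hs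
    have hD : 0 < s * deriv φ s + 2 * φ s := by linarith
    rw [key s hs]
    field_simp
    ring
  · intro t ht
    have hs := hζpos t ht
    have hval : Λ t = -(ζ t * deriv φ (ζ t)) / (ζ t * deriv φ (ζ t) + 2 * φ (ζ t)) := by
      have h := key (ζ t) hs
      rwa [hζ2 t ht] at h
    have hp := hφpos (ζ t) hs
    have hA := hsum (ζ t) hs
    set x := ζ t * deriv φ (ζ t)
    set p := φ (ζ t)
    have hD : 0 < x + 2 * p := by linarith
    rw [hval]
    constructor
    · rw [neg_lt, neg_div, neg_neg, div_lt_one hD]; linarith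
    · rw [neg_div, neg_lt, lt_div_iff₀ hD]; linarith
end

section
/- If φ(s) ≍ sʳ and (s·φ(s))' ≍ sʳ on (0, s₀) for some r > -1, and ψ is defined via the inverse of s·φ(s), then ψ(t) ≍ t^{-r/(1+r)} and (t·ψ(t))' ≍ t^{-r/(1+r)} on (0, t₀) for some t₀ > 0. -/
/-- If `φ(s) ≍ sʳ` and `(s·φ(s))' ≍ sʳ` on `(0, s₀)` for some `r > -1`, and `t·ψ(t)` is the
inverse of `s·φ(s)`, then `ψ(t) ≍ t^(-r/(1+r))` and `(t·ψ(t))' ≍ t^(-r/(1+r))` on some `(0, t₀)`. -/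
theorem stmt_11 (φ ψ : ℝ → ℝ) (r s₀ c₁ c₂ d₁ d₂ : ℝ)
    (hφpos : ∀ s > (0:ℝ), 0 < φ s)
    (hC1 : ContDiffOn ℝ 1 φ (Set.Ioi 0))
    (hmono : StrictMonoOn (fun s => s * φ s) (Set.Ioi 0))
    (hrange : (fun s => s * φ s) '' Set.Ioi 0 = Set.Ioi 0)
    (hψpos : ∀ t > (0:ℝ), 0 < ψ t)
    (hinv1 : ∀ s > (0:ℝ), (s * φ s) * ψ (s * φ s) = s)
    (hinv2 : ∀ t > (0:ℝ), (t * ψ t) * φ (t * ψ t) = t)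
    (hr : -1 < r) (hs₀ : 0 < s₀)
    (hc₁ : 0 < c₁) (hc₂ : 0 < c₂) (hd₁ : 0 < d₁) (hd₂ : 0 < d₂)
    (hφbound : ∀ s ∈ Set.Ioo 0 s₀, c₁ * s ^ r ≤ φ s ∧ φ s ≤ c₂ * s ^ r)
    (hdbound : ∀ s ∈ Set.Ioo 0 s₀,
      d₁ * s ^ r ≤ deriv (fun u => u * φ u) s ∧ deriv (fun u => u * φ u) s ≤ d₂ * s ^ r) :
    ∃ t₀ > (0:ℝ), ∃ e₁ > (0:ℝ), ∃ e₂ > (0:ℝ), ∃ f₁ > (0:ℝ), ∃ f₂ > (0:ℝ),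
      ∀ t ∈ Set.Ioo 0 t₀,
        (e₁ * t ^ (-r / (1 + r)) ≤ ψ t ∧ ψ t ≤ e₂ * t ^ (-r / (1 + r))) ∧
        (f₁ * t ^ (-r / (1 + r)) ≤ deriv (fun u => u * ψ u) t ∧
          deriv (fun u => u * ψ u) t ≤ f₂ * t ^ (-r / (1 + r))) := by
  have h1r : (0:ℝ) < 1 + r := by linarith
  have h1r' : (1 + r) ≠ 0 := ne_of_gt h1r
  set q : ℝ := 1 / (1 + r) with hqdef
  have hq0 : 0 < q := by positivity
  have hGpos : ∀ t > (0:ℝ), 0 < t * ψ t := fun t ht => mul_pos ht (hψpos t ht)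
  have hFpos : ∀ s > (0:ℝ), 0 < s * φ s := fun s hs => mul_pos hs (hφpos s hs)
  -- G is strictly monotone on Ioi 0
  have hGmono : StrictMonoOn (fun t => t * ψ t) (Set.Ioi 0) := by
    intro t1 h1 t2 h2 h12
    simp only [Set.mem_Ioi] at h1 h2
    by_contra hle
    push_neg at hle
    have hmon := hmono.monotoneOn (Set.mem_Ioi.mpr (hGpos t2 h2))
      (Set.mem_Ioi.mpr (hGpos t1 h1)) hle
    rw [hinv2 t1 h1, hinv2 t2 h2] at hmon
    linarith
  -- power composition helper
  have hpow : ∀ x : ℝ, 0 < x → (x ^ (1 + r)) ^ q = x := by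
    intro x hx
    rw [← Real.rpow_mul hx.le, hqdef, mul_one_div, div_self h1r', Real.rpow_one]
  refine ⟨s₀ * φ s₀, hFpos s₀ hs₀, c₂ ^ (-q), Real.rpow_pos_of_pos hc₂ _,
    c₁ ^ (-q), Real.rpow_pos_of_pos hc₁ _,
    c₁ * c₂ ^ (-q) / d₂, by positivity, c₂ * c₁ ^ (-q) / d₁, by positivity, ?_⟩
  rintro t ⟨ht0, htt₀⟩
  set E := -r / (1 + r) with hEdef
  -- the preimage point s
  set s := t * ψ t with hsdef
  have hs0 : 0 < s := hGpos t ht0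
  have hts : s * φ s = t := hinv2 t ht0
  have hss₀ : s < s₀ := by
    by_contra hle
    push_neg at hle
    have := hmono.monotoneOn (Set.mem_Ioi.mpr hs₀) (Set.mem_Ioi.mpr hs0) hle
    rw [hts] at this
    linarith
  obtain ⟨hφ1, hφ2⟩ := hφbound s ⟨hs0, hss₀⟩
  obtain ⟨hD1, hD2⟩ := hdbound s ⟨hs0, hss₀⟩
  have hA : 0 < s ^ r := Real.rpow_pos_of_pos hs0 r
  have hsA : s * s ^ r = s ^ (1 + r) := by
    rw [Real.rpow_add hs0, Real.rpow_one]
  -- t ≍ s^(1+r)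
  have htub : t ≤ c₂ * s ^ (1 + r) := by
    rw [← hsA, ← hts, show c₂ * (s * s ^ r) = s * (c₂ * s ^ r) by ring]
    exact mul_le_mul_of_nonneg_left hφ2 hs0.le
  have htlb : c₁ * s ^ (1 + r) ≤ t := by
    rw [← hsA, ← hts, show c₁ * (s * s ^ r) = s * (c₁ * s ^ r) by ring]
    exact mul_le_mul_of_nonneg_left hφ1 hs0.le
  -- bounds on s in terms of t
  have hslb : (t / c₂) ^ q ≤ s := by
    have h1 : t / c₂ ≤ s ^ (1 + r) := by rw [div_le_iff₀ hc₂, mul_comm]; exact htub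
    calc (t / c₂) ^ q ≤ (s ^ (1 + r)) ^ q :=
          Real.rpow_le_rpow (by positivity) h1 hq0.le
      _ = s := hpow s hs0
  have hsub : s ≤ (t / c₁) ^ q := by
    have h1 : s ^ (1 + r) ≤ t / c₁ := by rw [le_div_iff₀ hc₁, mul_comm]; exact htlb
    calc s = (s ^ (1 + r)) ^ q := (hpow s hs0).symm
      _ ≤ (t / c₁) ^ q := Real.rpow_le_rpow (by positivity) h1 hq0.le
  have hψt : ψ t = s / t := by
    rw [hsdef]; field_simp
  have hexp : t ^ E = t ^ q / t := by
    rw [hEdef, show -r / (1 + r) = q - 1 by rw [hqdef]; field_simp; ring,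
      Real.rpow_sub ht0, Real.rpow_one]
  -- ψ bounds
  have hψlb : c₂ ^ (-q) * t ^ E ≤ ψ t := by
    calc c₂ ^ (-q) * t ^ E = (t / c₂) ^ q / t := by
          rw [hexp, Real.div_rpow ht0.le hc₂.le, Real.rpow_neg hc₂.le]; ring
      _ ≤ s / t := by gcongr
      _ = ψ t := hψt.symm
  have hψub : ψ t ≤ c₁ ^ (-q) * t ^ E := by
    calc ψ t = s / t := hψt
      _ ≤ (t / c₁) ^ q / t := by gcongr
      _ = c₁ ^ (-q) * t ^ E := by
          rw [hexp, Real.div_rpow ht0.le hc₁.le, Real.rpow_neg hc₁.le]; ring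
  refine ⟨⟨hψlb, hψub⟩, ?_⟩
  -- derivative part
  set D := deriv (fun u => u * φ u) s with hDdef
  have hD0 : 0 < D := lt_of_lt_of_le (by positivity) hD1
  have hφdiff : DifferentiableAt ℝ φ s :=
    (hC1.differentiableOn one_ne_zero).differentiableAt (Ioi_mem_nhds hs0)
  have hFd : HasDerivAt (fun u => u * φ u) D s :=
    ((differentiableAt_fun_id.mul hφdiff)).hasDerivAt
  -- continuity of G at t
  have hGcont : ContinuousAt (fun u => u * ψ u) t := by
    apply hGmono.continuousAt_of_image_mem_nhds (Ioi_mem_nhds ht0)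
    apply Filter.mem_of_superset (Ioi_mem_nhds (hGpos t ht0))
    rintro x hx
    simp only [Set.mem_Ioi] at hx
    exact ⟨x * φ x, Set.mem_Ioi.mpr (hFpos x hx), hinv1 x hx⟩
  have hGd : HasDerivAt (fun u => u * ψ u) D⁻¹ t := by
    apply HasDerivAt.of_local_left_inverse hGcont hFd hD0.ne'
    filter_upwards [Ioi_mem_nhds ht0] with x hx
    exact hinv2 x (Set.mem_Ioi.mp hx)
  have hDeq : deriv (fun u => u * ψ u) t = D⁻¹ := hGd.deriv
  -- bounds on s ^ r in terms of t and s
  have hφs : φ s = t / s := by rw [eq_div_iff hs0.ne', mul_comm, hts]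
  have hArub : s ^ r ≤ t / (c₁ * s) := by
    rw [le_div_iff₀ (by positivity)]
    have h2 : c₁ * s ^ r ≤ t / s := hφs ▸ hφ1
    rw [le_div_iff₀ hs0] at h2
    rw [show s ^ r * (c₁ * s) = c₁ * s ^ r * s by ring]
    exact h2
  have hArlb : t / (c₂ * s) ≤ s ^ r := by
    rw [div_le_iff₀ (by positivity)]
    have h2 : t / s ≤ c₂ * s ^ r := hφs ▸ hφ2
    rw [div_le_iff₀ hs0] at h2
    rw [show s ^ r * (c₂ * s) = c₂ * s ^ r * s by ring]
    exact h2
  rw [hDeq]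
  constructor
  · calc c₁ * c₂ ^ (-q) / d₂ * t ^ E = (c₁ / d₂) * (c₂ ^ (-q) * t ^ E) := by ring
      _ ≤ (c₁ / d₂) * ψ t := by gcongr
      _ = (d₂ * (t / (c₁ * s)))⁻¹ := by
          rw [hψt]; field_simp
      _ ≤ (d₂ * s ^ r)⁻¹ := by gcongr
      _ ≤ D⁻¹ := inv_anti₀ hD0 hD2
  · calc D⁻¹ ≤ (d₁ * s ^ r)⁻¹ := inv_anti₀ (by positivity) hD1
      _ ≤ (d₁ * (t / (c₂ * s)))⁻¹ := by gcongr
      _ = (c₂ / d₁) * ψ t := by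
          rw [hψt]; field_simp
      _ ≤ (c₂ / d₁) * (c₁ ^ (-q) * t ^ E) := by gcongr
      _ = c₂ * c₁ ^ (-q) / d₁ * t ^ E := by ring
end

section
/- If φ(s) ≍ sʳ on (0, s₀) for some r > -1, then there exist K > 0 and t₀ > 0 such that ζ(t) ≤ K·t^{2/(2+r)} and Θ(t) ≤ K·t^{-r/(2+r)} for all t ∈ (0, t₀), where ζ is the inverse of s·√φ(s) and Θ(t) = ζ(t)/t. -/
/-- If `φ(s) ≍ sʳ` on `(0, s₀)` for some `r > -1`, then there exist `K > 0` and `t₀ > 0`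
with `ζ(t) ≤ K·t^(2/(2+r))` and `Θ(t) ≤ K·t^(-r/(2+r))` on `(0, t₀)`, where `ζ` is the
inverse of `s·√φ(s)` and `Θ(t) = ζ(t)/t`. -/
theorem stmt_12 (φ ζ : ℝ → ℝ) (r s₀ c₁ c₂ : ℝ)
    (hφpos : ∀ s > (0:ℝ), 0 < φ s)
    (hC1 : ContDiffOn ℝ 1 φ (Set.Ioi 0))
    (hderiv : ∀ s > (0:ℝ), 0 < deriv (fun u => u * φ u) s)
    (hrange : (fun s => s * φ s) '' Set.Ioi 0 = Set.Ioi 0)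
    (hζpos : ∀ t > (0:ℝ), 0 < ζ t)
    (hζ1 : ∀ s > (0:ℝ), ζ (s * Real.sqrt (φ s)) = s)
    (hζ2 : ∀ t > (0:ℝ), ζ t * Real.sqrt (φ (ζ t)) = t)
    (hr : -1 < r) (hs₀ : 0 < s₀) (hc₁ : 0 < c₁) (hc₂ : 0 < c₂)
    (hφbound : ∀ s ∈ Set.Ioo 0 s₀, c₁ * s ^ r ≤ φ s ∧ φ s ≤ c₂ * s ^ r) :
    ∃ K > (0:ℝ), ∃ t₀ > (0:ℝ), ∀ t ∈ Set.Ioo 0 t₀,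
      ζ t ≤ K * t ^ (2 / (2 + r)) ∧ ζ t / t ≤ K * t ^ (-r / (2 + r)) := by
  have h2r : (0:ℝ) < 2 + r := by linarith
  have h2rne : (2:ℝ) + r ≠ 0 := ne_of_gt h2r
  -- strict monotonicity of u ↦ u * φ u on (0,∞)
  have hmonof : StrictMonoOn (fun u => u * φ u) (Set.Ioi 0) := by
    apply strictMonoOn_of_deriv_pos (convex_Ioi 0)
    · exact continuousOn_id.mul hC1.continuousOn
    · intro x hx
      rw [interior_Ioi] at hx
      exact hderiv x hx
  -- strict monotonicity of u ↦ u * √(φ u)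
  have hg : ∀ a b : ℝ, 0 < a → a < b → a * Real.sqrt (φ a) < b * Real.sqrt (φ b) := by
    intro a b ha hab
    have hb : 0 < b := ha.trans hab
    have hφa := hφpos a ha
    have hφb := hφpos b hb
    have h1 : a * φ a < b * φ b := hmonof (Set.mem_Ioi.mpr ha) (Set.mem_Ioi.mpr hb) hab
    have ea : a * Real.sqrt (φ a) = Real.sqrt (a ^ 2 * φ a) := by
      rw [Real.sqrt_mul (sq_nonneg a), Real.sqrt_sq ha.le]
    have eb : b * Real.sqrt (φ b) = Real.sqrt (b ^ 2 * φ b) := by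
      rw [Real.sqrt_mul (sq_nonneg b), Real.sqrt_sq hb.le]
    rw [ea, eb]
    apply Real.sqrt_lt_sqrt (mul_nonneg (sq_nonneg a) hφa.le)
    rw [show a ^ 2 * φ a = a * (a * φ a) from by ring,
        show b ^ 2 * φ b = b * (b * φ b) from by ring]
    exact mul_lt_mul'' hab h1 ha.le (mul_pos ha hφa).le
  set s₁ := s₀ / 2 with hs₁def
  have hs₁ : 0 < s₁ := by positivity
  have hφs₁ : 0 < φ s₁ := hφpos s₁ hs₁
  have hsqφs₁ : 0 < Real.sqrt (φ s₁) := Real.sqrt_pos.mpr hφs₁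
  set t₀ := s₁ * Real.sqrt (φ s₁) with ht₀def
  have ht₀ : 0 < t₀ := mul_pos hs₁ hsqφs₁
  have hsc : 0 < Real.sqrt c₁ := Real.sqrt_pos.mpr hc₁
  set K := (Real.sqrt c₁)⁻¹ ^ (2 / (2 + r)) with hKdef
  have hK : 0 < K := Real.rpow_pos_of_pos (by positivity) _
  refine ⟨K, hK, t₀, ht₀, ?_⟩
  intro t ht
  obtain ⟨ht0, htt₀⟩ := ht
  have hz : 0 < ζ t := hζpos t ht0
  have hzt : ζ t * Real.sqrt (φ (ζ t)) = t := hζ2 t ht0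
  -- ζ t < s₁
  have hzs₁ : ζ t < s₁ := by
    by_contra h
    push_neg at h
    rcases eq_or_lt_of_le h with he | hlt
    · have : t = t₀ := by rw [← hzt, ← he, ht₀def]
      linarith
    · have h5 := hg s₁ (ζ t) hs₁ hlt
      rw [hzt, ← ht₀def] at h5
      linarith
  have hzs₀ : ζ t < s₀ := by
    have : s₁ < s₀ := by rw [hs₁def]; linarith
    linarith
  have hlow : c₁ * (ζ t) ^ r ≤ φ (ζ t) := (hφbound (ζ t) ⟨hz, hzs₀⟩).1
  -- t ≥ √c₁ * ζ^((2+r)/2)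
  have key : Real.sqrt c₁ * (ζ t) ^ ((2 + r) / 2) ≤ t := by
    have h1 : Real.sqrt (c₁ * (ζ t) ^ r) ≤ Real.sqrt (φ (ζ t)) :=
      Real.sqrt_le_sqrt hlow
    have h2 : Real.sqrt (c₁ * (ζ t) ^ r) = Real.sqrt c₁ * (ζ t) ^ (r / 2) := by
      have hsr : Real.sqrt ((ζ t) ^ r) = (ζ t) ^ (r / 2) := by
        rw [show r / 2 = r * (1 / 2) from by ring, Real.rpow_mul hz.le]
        exact Real.sqrt_eq_rpow _
      rw [Real.sqrt_mul hc₁.le, hsr]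
    have h3 : ζ t * (Real.sqrt c₁ * (ζ t) ^ (r / 2)) ≤ ζ t * Real.sqrt (φ (ζ t)) := by
      apply mul_le_mul_of_nonneg_left _ hz.le
      rw [← h2]; exact h1
    rw [hzt] at h3
    calc Real.sqrt c₁ * (ζ t) ^ ((2 + r) / 2)
        = ζ t * (Real.sqrt c₁ * (ζ t) ^ (r / 2)) := by
          rw [show (2 + r) / 2 = 1 + r / 2 from by ring, Real.rpow_add hz, Real.rpow_one]
          ring
      _ ≤ t := h3
  have hpow : (ζ t) ^ ((2 + r) / 2) ≤ t * (Real.sqrt c₁)⁻¹ := by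
    rw [← div_eq_mul_inv, le_div_iff₀ hsc]
    linarith [key]
  have hfirst : ζ t ≤ K * t ^ (2 / (2 + r)) := by
    have e1 : ζ t = ((ζ t) ^ ((2 + r) / 2)) ^ (2 / (2 + r)) := by
      rw [← Real.rpow_mul hz.le,
        show (2 + r) / 2 * (2 / (2 + r)) = 1 from by field_simp, Real.rpow_one]
    rw [e1]
    calc ((ζ t) ^ ((2 + r) / 2)) ^ (2 / (2 + r))
        ≤ (t * (Real.sqrt c₁)⁻¹) ^ (2 / (2 + r)) :=
          Real.rpow_le_rpow (Real.rpow_nonneg hz.le _) hpow (by positivity)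
      _ = t ^ (2 / (2 + r)) * ((Real.sqrt c₁)⁻¹) ^ (2 / (2 + r)) :=
          Real.mul_rpow ht0.le (by positivity)
      _ = K * t ^ (2 / (2 + r)) := by rw [hKdef]; ring
  refine ⟨hfirst, ?_⟩
  have hdiv : ζ t / t ≤ K * t ^ (2 / (2 + r)) / t := by gcongr
  calc ζ t / t ≤ K * t ^ (2 / (2 + r)) / t := hdiv
    _ = K * (t ^ (2 / (2 + r)) / t ^ (1:ℝ)) := by rw [Real.rpow_one]; ring
    _ = K * t ^ (2 / (2 + r) - 1) := by rw [← Real.rpow_sub ht0]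
    _ = K * t ^ (-r / (2 + r)) := by
        rw [show 2 / (2 + r) - 1 = -r / (2 + r) from by field_simp; ring]
end

section
/- Let A be an N×N complex matrix with Im A symmetric, let γ ∈ ℝ satisfy |γ|·|⟨Im A ξ, ξ⟩| ≤ 2·⟨Re A ξ, ξ⟩ for all ξ ∈ ℝᴺ. Then the real quadratic form S(ξ,η) = ⟨Re A ξ, ξ⟩ + ⟨Re A η, η⟩ + γ·⟨Im A ξ, η⟩ is nonnegative for all ξ, η ∈ ℝᴺ. -/
/-- Let `A` be an `N×N` complex matrix with `Im A` symmetric, and let `γ ∈ ℝ` satisfy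
`|γ|·|⟨Im A ξ, ξ⟩| ≤ 2·⟨Re A ξ, ξ⟩` for all `ξ ∈ ℝᴺ`. Then the form
`S(ξ,η) = ⟨Re A ξ, ξ⟩ + ⟨Re A η, η⟩ + γ·⟨Im A ξ, η⟩` is nonnegative. -/
theorem stmt_14 (N : ℕ) (A : Matrix (Fin N) (Fin N) ℂ)
    (hsym : (Matrix.of (fun i j => (A i j).im)).IsSymm)
    (γ : ℝ)
    (hγ : ∀ ξ : Fin N → ℝ,
      |γ| * |dotProduct ξ ((Matrix.of (fun i j => (A i j).im)).mulVec ξ)|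
        ≤ 2 * dotProduct ξ ((Matrix.of (fun i j => (A i j).re)).mulVec ξ)) :
    ∀ ξ η : Fin N → ℝ,
      0 ≤ dotProduct ξ ((Matrix.of (fun i j => (A i j).re)).mulVec ξ)
          + dotProduct η ((Matrix.of (fun i j => (A i j).re)).mulVec η)
          + γ * dotProduct ξ ((Matrix.of (fun i j => (A i j).im)).mulVec η) := by
  intro ξ η
  set B : Matrix (Fin N) (Fin N) ℝ := Matrix.of (fun i j => (A i j).im) with hBdef
  set R : Matrix (Fin N) (Fin N) ℝ := Matrix.of (fun i j => (A i j).re) with hRdef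
  have hB : ∀ x y : Fin N → ℝ,
      dotProduct x (B.mulVec y) = dotProduct y (B.mulVec x) := by
    intro x y
    rw [Matrix.dotProduct_mulVec, ← Matrix.mulVec_transpose, hsym, dotProduct_comm]
  -- expansions
  have hq : ∀ (M : Matrix (Fin N) (Fin N) ℝ) (x y : Fin N → ℝ),
      dotProduct (x + y) (M.mulVec (x + y))
        = dotProduct x (M.mulVec x) + dotProduct y (M.mulVec y)
          + dotProduct x (M.mulVec y) + dotProduct y (M.mulVec x) := by
    intro M x y
    simp [Matrix.mulVec_add, add_dotProduct, dotProduct_add]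
    ring
  have hq' : ∀ (M : Matrix (Fin N) (Fin N) ℝ) (x y : Fin N → ℝ),
      dotProduct (x - y) (M.mulVec (x - y))
        = dotProduct x (M.mulVec x) + dotProduct y (M.mulVec y)
          - dotProduct x (M.mulVec y) - dotProduct y (M.mulVec x) := by
    intro M x y
    simp [Matrix.mulVec_sub, sub_dotProduct, dotProduct_sub]
    ring
  have h1 := hγ (ξ + η)
  have h2 := hγ (ξ - η)
  rw [hq B ξ η, hq R ξ η] at h1
  rw [hq' B ξ η, hq' R ξ η] at h2
  rw [hB η ξ] at h1 h2
  set b := dotProduct ξ (B.mulVec η)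
  set qξ := dotProduct ξ (B.mulVec ξ)
  set qη := dotProduct η (B.mulVec η)
  set rξ := dotProduct ξ (R.mulVec ξ)
  set rη := dotProduct η (R.mulVec η)
  set rxy := dotProduct ξ (R.mulVec η)
  set ryx := dotProduct η (R.mulVec ξ)
  -- h1 : |γ| * |qξ + qη + b + b| ≤ 2 * (rξ + rη + rxy + ryx)
  -- h2 : |γ| * |qξ + qη - b - b| ≤ 2 * (rξ + rη - rxy - ryx)
  have e1 : γ * (qξ + qη + b + b) ≥ -(2 * (rξ + rη + rxy + ryx)) := by
    have := neg_abs_le (γ * (qξ + qη + b + b))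
    rw [abs_mul] at this
    linarith
  have e2 : -(γ * (qξ + qη - b - b)) ≥ -(2 * (rξ + rη - rxy - ryx)) := by
    have := neg_abs_le (γ * (qξ + qη - b - b))
    rw [abs_mul] at this
    have h3 : -(|γ| * |qξ + qη - b - b|) ≤ -(γ * (qξ + qη - b - b)) := by
      have := le_abs_self (γ * (qξ + qη - b - b))
      rw [abs_mul] at this
      linarith
    linarith
  linarith
end

section
/- Let A be an N×N complex matrix with Im A symmetric and let λ ∈ (-1,1). The inequality (1-λ²)·⟨Re A ξ, ξ⟩ + ⟨Re A η, η⟩ + 2λ·⟨Im A ξ, η⟩ ≥ 0 holds for all ξ, η ∈ ℝᴺ if and only if |λ|·|⟨Im A ξ, ξ⟩| ≤ √(1-λ²)·⟨Re A ξ, ξ⟩ for all ξ ∈ ℝᴺ. -/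
/-- Let `A` be an `N×N` complex matrix with `Im A` symmetric and `λ ∈ (-1,1)`. Then
`(1-λ²)·⟨Re A ξ, ξ⟩ + ⟨Re A η, η⟩ + 2λ·⟨Im A ξ, η⟩ ≥ 0` for all `ξ, η` iff
`|λ|·|⟨Im A ξ, ξ⟩| ≤ √(1-λ²)·⟨Re A ξ, ξ⟩` for all `ξ`. -/
theorem stmt_15 (N : ℕ) (A : Matrix (Fin N) (Fin N) ℂ)
    (hsym : (Matrix.of (fun i j => (A i j).im)).IsSymm)
    (lam : ℝ) (hlam : -1 < lam ∧ lam < 1) :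
    (∀ ξ η : Fin N → ℝ,
      0 ≤ (1 - lam ^ 2)
            * dotProduct ξ ((Matrix.of (fun i j => (A i j).re)).mulVec ξ)
          + dotProduct η ((Matrix.of (fun i j => (A i j).re)).mulVec η)
          + 2 * lam * dotProduct ξ ((Matrix.of (fun i j => (A i j).im)).mulVec η))
    ↔ (∀ ξ : Fin N → ℝ,
      |lam| * |dotProduct ξ ((Matrix.of (fun i j => (A i j).im)).mulVec ξ)|
        ≤ Real.sqrt (1 - lam ^ 2)
            * dotProduct ξ ((Matrix.of (fun i j => (A i j).re)).mulVec ξ)) := by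
  obtain ⟨h1, h2⟩ := hlam
  set R : Matrix (Fin N) (Fin N) ℝ := Matrix.of (fun i j => (A i j).re) with hR
  set S : Matrix (Fin N) (Fin N) ℝ := Matrix.of (fun i j => (A i j).im) with hS
  have hl2 : 0 < 1 - lam ^ 2 := by nlinarith
  set c := Real.sqrt (1 - lam ^ 2) with hc
  have hcpos : 0 < c := Real.sqrt_pos.mpr hl2
  have hcsq : c ^ 2 = 1 - lam ^ 2 := Real.sq_sqrt hl2.le
  have gsymm : ∀ x y : Fin N → ℝ,
      dotProduct x (S.mulVec y) = dotProduct y (S.mulVec x) := by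
    intro x y
    rw [Matrix.dotProduct_mulVec]
    conv_lhs => rw [← hsym.eq]
    rw [Matrix.vecMul_transpose, dotProduct_comm]
  constructor
  · intro h ξ
    set q := dotProduct ξ (R.mulVec ξ) with hq'
    set s := dotProduct ξ (S.mulVec ξ) with hs'
    have hq : 0 ≤ q := by
      have := h ξ 0
      simp only [Matrix.mulVec_zero, dotProduct_zero, zero_dotProduct,
        mul_zero, add_zero] at this
      nlinarith
    have key : ∀ t : ℝ, 0 ≤ (1 - lam ^ 2) * q + t ^ 2 * q + 2 * lam * t * s := by
      intro t
      have h0 := h ξ (t • ξ)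
      have e1 : dotProduct (t • ξ) (R.mulVec (t • ξ)) = t ^ 2 * q := by
        simp only [Matrix.mulVec_smul, smul_dotProduct, dotProduct_smul,
          smul_eq_mul]
        ring
      have e2 : dotProduct ξ (S.mulVec (t • ξ)) = t * s := by
        simp only [Matrix.mulVec_smul, dotProduct_smul, smul_eq_mul]
        rfl
      rw [e1, e2] at h0
      linarith
    have main : lam ^ 2 * s ^ 2 ≤ (1 - lam ^ 2) * q ^ 2 := by
      rcases eq_or_lt_of_le hq with hq0 | hqpos
      · have hk := key (-(lam * s))
        nlinarith [hk, hq0]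
      · have hk := key (-(lam * s) / q)
        have hne : q ≠ 0 := ne_of_gt hqpos
        have e3 : ((-(lam * s) / q) ^ 2 * q + 2 * lam * (-(lam * s) / q) * s)
            = -(lam ^ 2 * s ^ 2) / q := by
          field_simp
          ring
        have hk2 : 0 ≤ (1 - lam ^ 2) * q - lam ^ 2 * s ^ 2 / q := by
          have e5 : (1 - lam ^ 2) * q + ((-(lam * s) / q) ^ 2 * q
              + 2 * lam * (-(lam * s) / q) * s)
              = (1 - lam ^ 2) * q - lam ^ 2 * s ^ 2 / q := by
            rw [e3]; ring
          linarith [hk, e5.symm.le]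
        have hk3 : 0 ≤ ((1 - lam ^ 2) * q - lam ^ 2 * s ^ 2 / q) * q :=
          mul_nonneg hk2 hq
        have e4 : ((1 - lam ^ 2) * q - lam ^ 2 * s ^ 2 / q) * q
            = (1 - lam ^ 2) * q ^ 2 - lam ^ 2 * s ^ 2 := by
          field_simp
        linarith [e4 ▸ hk3]
    calc |lam| * |s| = Real.sqrt (lam ^ 2 * s ^ 2) := by
          rw [Real.sqrt_mul (sq_nonneg lam), Real.sqrt_sq_eq_abs, Real.sqrt_sq_eq_abs]
      _ ≤ Real.sqrt ((1 - lam ^ 2) * q ^ 2) := Real.sqrt_le_sqrt main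
      _ = c * q := by
          rw [Real.sqrt_mul hl2.le, Real.sqrt_sq_eq_abs, abs_of_nonneg hq, hc]
  · intro h ξ η
    set u := c • ξ with hu
    have fplus : dotProduct (u + η) (R.mulVec (u + η))
        = (1 - lam ^ 2) * dotProduct ξ (R.mulVec ξ)
          + c * dotProduct ξ (R.mulVec η) + c * dotProduct η (R.mulVec ξ)
          + dotProduct η (R.mulVec η) := by
      simp only [hu, Matrix.mulVec_add, Matrix.mulVec_smul, add_dotProduct,
        dotProduct_add, smul_dotProduct, dotProduct_smul, smul_eq_mul,
        ← hcsq]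
      ring
    have fminus : dotProduct (u - η) (R.mulVec (u - η))
        = (1 - lam ^ 2) * dotProduct ξ (R.mulVec ξ)
          - c * dotProduct ξ (R.mulVec η) - c * dotProduct η (R.mulVec ξ)
          + dotProduct η (R.mulVec η) := by
      simp only [hu, Matrix.mulVec_sub, Matrix.mulVec_smul, sub_dotProduct,
        dotProduct_sub, smul_dotProduct, dotProduct_smul, smul_eq_mul,
        ← hcsq]
      ring
    have gplus : dotProduct (u + η) (S.mulVec (u + η))
        = (1 - lam ^ 2) * dotProduct ξ (S.mulVec ξ)
          + 2 * c * dotProduct ξ (S.mulVec η)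
          + dotProduct η (S.mulVec η) := by
      simp only [hu, Matrix.mulVec_add, Matrix.mulVec_smul, add_dotProduct,
        dotProduct_add, smul_dotProduct, dotProduct_smul, smul_eq_mul,
        gsymm η ξ, ← hcsq]
      ring
    have gminus : dotProduct (u - η) (S.mulVec (u - η))
        = (1 - lam ^ 2) * dotProduct ξ (S.mulVec ξ)
          - 2 * c * dotProduct ξ (S.mulVec η)
          + dotProduct η (S.mulVec η) := by
      simp only [hu, Matrix.mulVec_sub, Matrix.mulVec_smul, sub_dotProduct,
        dotProduct_sub, smul_dotProduct, dotProduct_smul, smul_eq_mul,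
        gsymm η ξ, ← hcsq]
      ring
    have hp := h (u + η)
    have hm := h (u - η)
    rw [fplus, gplus] at hp
    rw [fminus, gminus] at hm
    set X := dotProduct ξ (R.mulVec ξ)
    set Z := dotProduct η (R.mulVec η)
    set Y1 := dotProduct ξ (R.mulVec η)
    set Y2 := dotProduct η (R.mulVec ξ)
    set GX := dotProduct ξ (S.mulVec ξ)
    set GZ := dotProduct η (S.mulVec η)
    set GY := dotProduct ξ (S.mulVec η)
    set Gp := (1 - lam ^ 2) * GX + 2 * c * GY + GZ with hGp
    set Gm := (1 - lam ^ 2) * GX - 2 * c * GY + GZ with hGm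
    have a1 : -(c * ((1 - lam ^ 2) * X + c * Y1 + c * Y2 + Z)) ≤ lam * Gp := by
      have n1 : -(|lam| * |Gp|) ≤ lam * Gp := by
        rw [← abs_mul]; exact neg_abs_le _
      linarith [hp]
    have a2 : -(c * ((1 - lam ^ 2) * X - c * Y1 - c * Y2 + Z)) ≤ -(lam * Gm) := by
      have n2 : lam * Gm ≤ |lam| * |Gm| := by
        rw [← abs_mul]; exact le_abs_self _
      linarith [hm]
    have key : -(2 * c * ((1 - lam ^ 2) * X + Z)) ≤ 4 * c * lam * GY := by
      have h6 := add_le_add a1 a2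
      rw [hGp, hGm] at h6
      nlinarith [h6]
    nlinarith [key, hcpos]
end

section
/- For Φ(s) = s⁴/(s²+1), so φ(s) = Φ'(s)/s = 2s²(2+s²)/(s²+1)², the function |s·Φ''(s) - Φ'(s)| / (2·√(s·Φ'(s)·Φ''(s))) equals 2/√((s²+1)(s²+2)(s⁴+3s²+6)) for all s > 0, and its supremum over s > 0 is 1/√3. -/
open Real Filter Set

private noncomputable def F17 : ℝ → ℝ := fun s => s ^ 4 / (s ^ 2 + 1)
private noncomputable def G17 : ℝ → ℝ := fun s => (2*s^5 + 4*s^3) / (s^2+1)^2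

private lemma denom_pos (s : ℝ) : (0:ℝ) < s ^ 2 + 1 := by positivity

private lemma derivF (s : ℝ) : deriv F17 s = G17 s := by
  have h1 : HasDerivAt (fun s : ℝ => s ^ 4) (4 * s ^ 3) s := by
    simpa using hasDerivAt_pow 4 s
  have h2 : HasDerivAt (fun s : ℝ => s ^ 2 + 1) (2 * s) s := by
    simpa using (hasDerivAt_pow 2 s).add_const 1
  have h : HasDerivAt (fun s : ℝ => s ^ 4 / (s ^ 2 + 1)) _ s := h1.div h2 (denom_pos s).ne'
  unfold F17 G17
  rw [h.deriv]
  field_simp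
  ring

private lemma derivG (s : ℝ) : deriv G17 s = (2*s^6 + 6*s^4 + 12*s^2) / (s^2+1)^3 := by
  have h1 : HasDerivAt (fun s : ℝ => 2*s^5 + 4*s^3) (2*(5*s^4) + 4*(3*s^2)) s := by
    simpa [Pi.add_def] using ((hasDerivAt_pow 5 s).const_mul 2).add ((hasDerivAt_pow 3 s).const_mul 4)
  have h2 : HasDerivAt (fun s : ℝ => (s^2+1)^2) (2*(s^2+1)*(2*s)) s := by
    simpa [Pi.pow_def] using ((hasDerivAt_pow 2 s).add_const 1).pow 2
  have hne : ((s:ℝ)^2+1)^2 ≠ 0 := by positivity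
  have h : HasDerivAt (fun s : ℝ => (2*s^5 + 4*s^3) / (s^2+1)^2) _ s := h1.div h2 hne
  unfold G17
  rw [h.deriv]
  have hne' : ((s:ℝ)^2+1) ≠ 0 := (denom_pos s).ne'
  field_simp
  ring

/-- For `Φ(s) = s⁴/(s²+1)`, the function `|s·Φ''(s) - Φ'(s)| / (2·√(s·Φ'(s)·Φ''(s)))`
equals `2/√((s²+1)(s²+2)(s⁴+3s²+6))` for all `s > 0`, and its supremum over `s > 0`
is `1/√3`. -/
theorem stmt_17 (Φ : ℝ → ℝ)
    (hΦ : ∀ s > (0:ℝ), Φ s = s ^ 4 / (s ^ 2 + 1)) :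
    (∀ s > (0:ℝ),
      |s * deriv (deriv Φ) s - deriv Φ s|
          / (2 * Real.sqrt (s * deriv Φ s * deriv (deriv Φ) s))
        = 2 / Real.sqrt ((s ^ 2 + 1) * (s ^ 2 + 2) * (s ^ 4 + 3 * s ^ 2 + 6))) ∧
    sSup ((fun s => |s * deriv (deriv Φ) s - deriv Φ s|
          / (2 * Real.sqrt (s * deriv Φ s * deriv (deriv Φ) s))) '' Set.Ioi 0)
      = 1 / Real.sqrt 3 := by
  have hev : ∀ s > (0:ℝ), Φ =ᶠ[nhds s] F17 := by
    intro s hs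
    exact Filter.eventuallyEq_of_mem (isOpen_Ioi.mem_nhds hs) (fun x hx => hΦ x hx)
  have hd1 : ∀ s > (0:ℝ), deriv Φ s = (2*s^5 + 4*s^3) / (s^2+1)^2 := by
    intro s hs
    rw [(hev s hs).deriv_eq, derivF]; rfl
  have hd2 : ∀ s > (0:ℝ), deriv (deriv Φ) s = (2*s^6 + 6*s^4 + 12*s^2) / (s^2+1)^3 := by
    intro s hs
    have h1 : deriv Φ =ᶠ[nhds s] deriv F17 := (hev s hs).deriv
    have h2 : deriv F17 =ᶠ[nhds s] G17 := Filter.Eventually.of_forall derivF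
    rw [(h1.trans h2).deriv_eq, derivG]
  -- part 1
  have part1 : ∀ s > (0:ℝ),
      |s * deriv (deriv Φ) s - deriv Φ s|
          / (2 * Real.sqrt (s * deriv Φ s * deriv (deriv Φ) s))
        = 2 / Real.sqrt ((s ^ 2 + 1) * (s ^ 2 + 2) * (s ^ 4 + 3 * s ^ 2 + 6)) := by
    intro s hs
    rw [hd1 s hs, hd2 s hs]
    set c : ℝ := 2 * s^3 / (s^2+1)^3 with hc
    have hcpos : 0 < c := by positivity
    have hne : ((s:ℝ)^2+1) ≠ 0 := (denom_pos s).ne'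
    have hnum : s * ((2*s^6 + 6*s^4 + 12*s^2) / (s^2+1)^3)
        - (2*s^5 + 4*s^3) / (s^2+1)^2 = 4 * c := by
      rw [hc]; field_simp; ring
    have hprod : s * ((2*s^5 + 4*s^3) / (s^2+1)^2) * ((2*s^6 + 6*s^4 + 12*s^2) / (s^2+1)^3)
        = c^2 * ((s ^ 2 + 1) * (s ^ 2 + 2) * (s ^ 4 + 3 * s ^ 2 + 6)) := by
      rw [hc]; field_simp; ring
    rw [hnum, hprod]
    rw [Real.sqrt_mul (sq_nonneg c), Real.sqrt_sq hcpos.le]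
    rw [abs_of_pos (by positivity)]
    have hApos : (0:ℝ) < (s ^ 2 + 1) * (s ^ 2 + 2) * (s ^ 4 + 3 * s ^ 2 + 6) := by positivity
    have hsA : 0 < Real.sqrt ((s ^ 2 + 1) * (s ^ 2 + 2) * (s ^ 4 + 3 * s ^ 2 + 6)) :=
      Real.sqrt_pos.mpr hApos
    field_simp
    ring
  refine ⟨part1, ?_⟩
  set f : ℝ → ℝ := fun s => |s * deriv (deriv Φ) s - deriv Φ s|
          / (2 * Real.sqrt (s * deriv Φ s * deriv (deriv Φ) s)) with hf
  have hub : ∀ y ∈ f '' Set.Ioi 0, y ≤ 1 / Real.sqrt 3 := by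
    rintro y ⟨s, hs, rfl⟩
    rw [Set.mem_Ioi] at hs
    rw [hf]
    simp only
    rw [part1 s hs]
    have h12 : (12:ℝ) ≤ (s ^ 2 + 1) * (s ^ 2 + 2) * (s ^ 4 + 3 * s ^ 2 + 6) := by nlinarith [sq_nonneg s, sq_nonneg (s^2), pow_pos (pow_pos hs 2) 2]
    have hs12 : Real.sqrt 12 ≤ Real.sqrt ((s ^ 2 + 1) * (s ^ 2 + 2) * (s ^ 4 + 3 * s ^ 2 + 6)) :=
      Real.sqrt_le_sqrt h12
    have h12' : Real.sqrt 12 = 2 * Real.sqrt 3 := by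
      rw [show (12:ℝ) = 2^2 * 3 by norm_num, Real.sqrt_mul (by positivity), Real.sqrt_sq (by norm_num : (0:ℝ) ≤ 2)]
    have hs3 : 0 < Real.sqrt 3 := Real.sqrt_pos.mpr (by norm_num)
    calc 2 / Real.sqrt ((s ^ 2 + 1) * (s ^ 2 + 2) * (s ^ 4 + 3 * s ^ 2 + 6))
        ≤ 2 / Real.sqrt 12 := by
          apply div_le_div_of_nonneg_left (by norm_num) (by rw [h12']; positivity) hs12
      _ = 1 / Real.sqrt 3 := by rw [h12']; field_simp
  have hbdd : BddAbove (f '' Set.Ioi 0) := ⟨1 / Real.sqrt 3, hub⟩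
  have hne : (f '' Set.Ioi 0).Nonempty := ⟨f 1, 1, Set.mem_Ioi.mpr one_pos, rfl⟩
  refine le_antisymm (csSup_le hne hub) ?_
  -- limit as s → 0⁺
  have g := fun s : ℝ => 2 / Real.sqrt ((s ^ 2 + 1) * (s ^ 2 + 2) * (s ^ 4 + 3 * s ^ 2 + 6))
  have hg0 : (2:ℝ) / Real.sqrt ((0 ^ 2 + 1) * (0 ^ 2 + 2) * (0 ^ 4 + 3 * 0 ^ 2 + 6)) = 1 / Real.sqrt 3 := by
    have h12' : Real.sqrt 12 = 2 * Real.sqrt 3 := by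
      rw [show (12:ℝ) = 2^2 * 3 by norm_num, Real.sqrt_mul (by positivity), Real.sqrt_sq (by norm_num : (0:ℝ) ≤ 2)]
    have hs3 : (0:ℝ) < Real.sqrt 3 := Real.sqrt_pos.mpr (by norm_num)
    norm_num [h12']
    field_simp
  have hcont : ContinuousAt (fun s : ℝ => 2 / Real.sqrt ((s ^ 2 + 1) * (s ^ 2 + 2) * (s ^ 4 + 3 * s ^ 2 + 6))) 0 := by
    apply ContinuousAt.div continuousAt_const
    · exact (Real.continuous_sqrt.comp (by fun_prop)).continuousAt
    · norm_num
  have htend : Tendsto f (nhdsWithin 0 (Set.Ioi 0)) (nhds (1 / Real.sqrt 3)) := by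
    have h1 : Tendsto (fun s : ℝ => 2 / Real.sqrt ((s ^ 2 + 1) * (s ^ 2 + 2) * (s ^ 4 + 3 * s ^ 2 + 6)))
        (nhdsWithin 0 (Set.Ioi 0)) (nhds (1 / Real.sqrt 3)) := by
      rw [← hg0]
      exact hcont.continuousWithinAt.tendsto
    apply h1.congr'
    filter_upwards [self_mem_nhdsWithin] with s hs
    exact (part1 s hs).symm
  refine le_of_tendsto htend ?_
  filter_upwards [self_mem_nhdsWithin] with s hs
  exact le_csSup hbdd ⟨s, hs, rfl⟩
end

section
/- For Φ(s) = s²(s²+2)/(s²+1) - 2·log(s²+1), the function |s·Φ''(s) - Φ'(s)| / (2·√(s·Φ'(s)·Φ''(s))) equals 2/√((s²+1)(s²+5)) for all s > 0, and its supremum over s > 0 is 2/√5. -/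
open Set Filter

private lemma hasDerivF (s : ℝ) :
    HasDerivAt (fun x : ℝ => x ^ 2 * (x ^ 2 + 2) / (x ^ 2 + 1) - 2 * Real.log (x ^ 2 + 1))
      (2 * s ^ 5 / (s ^ 2 + 1) ^ 2) s := by
  have h2 : HasDerivAt (fun x : ℝ => x ^ 2 + 1) (2 * s) s := by
    simpa using ((hasDerivAt_pow 2 s).add_const 1)
  have hn : HasDerivAt (fun x : ℝ => x ^ 2 * (x ^ 2 + 2))
      (2 * s * (s ^ 2 + 2) + s ^ 2 * (2 * s)) s := by
    have := (hasDerivAt_pow 2 s).mul ((hasDerivAt_pow 2 s).add_const 2)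
    exact this.congr_deriv (by norm_num)
  have hq : HasDerivAt (fun x : ℝ => x ^ 2 * (x ^ 2 + 2) / (x ^ 2 + 1))
      (((2 * s * (s ^ 2 + 2) + s ^ 2 * (2 * s)) * (s ^ 2 + 1)
        - s ^ 2 * (s ^ 2 + 2) * (2 * s)) / (s ^ 2 + 1) ^ 2) s :=
    hn.div h2 (by positivity)
  have hl : HasDerivAt (fun x : ℝ => 2 * Real.log (x ^ 2 + 1))
      (2 * ((s ^ 2 + 1)⁻¹ * (2 * s))) s := by
    have := (Real.hasDerivAt_log (x := s ^ 2 + 1) (by positivity)).comp s h2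
    exact this.const_mul 2
  have h := hq.sub hl
  refine h.congr_deriv ?_
  have h0 : (s ^ 2 + 1) ≠ 0 := by positivity
  field_simp
  ring

private lemma hasDerivG (s : ℝ) :
    HasDerivAt (fun x : ℝ => 2 * x ^ 5 / (x ^ 2 + 1) ^ 2)
      (2 * s ^ 4 * (s ^ 2 + 5) / (s ^ 2 + 1) ^ 3) s := by
  have hn : HasDerivAt (fun x : ℝ => 2 * x ^ 5) (2 * (5 * s ^ 4)) s := by
    simpa using (hasDerivAt_pow 5 s).const_mul 2
  have h2 : HasDerivAt (fun x : ℝ => x ^ 2 + 1) (2 * s) s := by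
    simpa using ((hasDerivAt_pow 2 s).add_const 1)
  have hd : HasDerivAt (fun x : ℝ => (x ^ 2 + 1) ^ 2) (2 * (s ^ 2 + 1) ^ 1 * (2 * s)) s :=
    h2.pow 2
  have h := hn.div hd (by positivity)
  refine h.congr_deriv ?_
  have h0 : (s ^ 2 + 1) ≠ 0 := by positivity
  field_simp
  ring

/-- For `Φ(s) = s²(s²+2)/(s²+1) - 2·log(s²+1)`, the function
`|s·Φ''(s) - Φ'(s)| / (2·√(s·Φ'(s)·Φ''(s)))` equals `2/√((s²+1)(s²+5))` for all
`s > 0`, and its supremum over `s > 0` is `2/√5`. -/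
theorem stmt_18 (Φ : ℝ → ℝ)
    (hΦ : ∀ s > (0:ℝ), Φ s = s ^ 2 * (s ^ 2 + 2) / (s ^ 2 + 1) - 2 * Real.log (s ^ 2 + 1)) :
    (∀ s > (0:ℝ),
      |s * deriv (deriv Φ) s - deriv Φ s|
          / (2 * Real.sqrt (s * deriv Φ s * deriv (deriv Φ) s))
        = 2 / Real.sqrt ((s ^ 2 + 1) * (s ^ 2 + 5))) ∧
    sSup ((fun s => |s * deriv (deriv Φ) s - deriv Φ s|
          / (2 * Real.sqrt (s * deriv Φ s * deriv (deriv Φ) s))) '' Set.Ioi 0)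
      = 2 / Real.sqrt 5 := by
  -- first derivative on Ioi 0
  have hA : ∀ s ∈ Ioi (0:ℝ), deriv Φ s = 2 * s ^ 5 / (s ^ 2 + 1) ^ 2 := by
    intro s hs
    have hev : Φ =ᶠ[nhds s] fun x : ℝ =>
        x ^ 2 * (x ^ 2 + 2) / (x ^ 2 + 1) - 2 * Real.log (x ^ 2 + 1) :=
      Filter.eventuallyEq_of_mem (Ioi_mem_nhds hs) (fun x hx => hΦ x hx)
    rw [hev.deriv_eq, (hasDerivF s).deriv]
  -- second derivative on Ioi 0
  have hB : ∀ s ∈ Ioi (0:ℝ), deriv (deriv Φ) s = 2 * s ^ 4 * (s ^ 2 + 5) / (s ^ 2 + 1) ^ 3 := by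
    intro s hs
    have hev : deriv Φ =ᶠ[nhds s] fun x : ℝ => 2 * x ^ 5 / (x ^ 2 + 1) ^ 2 :=
      Filter.eventuallyEq_of_mem (Ioi_mem_nhds hs) (fun x hx => hA x hx)
    rw [hev.deriv_eq, (hasDerivG s).deriv]
  have hmain : ∀ s > (0:ℝ),
      |s * deriv (deriv Φ) s - deriv Φ s|
          / (2 * Real.sqrt (s * deriv Φ s * deriv (deriv Φ) s))
        = 2 / Real.sqrt ((s ^ 2 + 1) * (s ^ 2 + 5)) := by
    intro s hs
    have hs' : (0:ℝ) < s := hs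
    have h0 : (0:ℝ) < s ^ 2 + 1 := by positivity
    rw [hA s hs, hB s hs]
    have hc : (0:ℝ) < 2 * s ^ 5 / (s ^ 2 + 1) ^ 3 := by positivity
    have hnum : s * (2 * s ^ 4 * (s ^ 2 + 5) / (s ^ 2 + 1) ^ 3)
        - 2 * s ^ 5 / (s ^ 2 + 1) ^ 2 = 4 * (2 * s ^ 5 / (s ^ 2 + 1) ^ 3) := by
      field_simp
      ring
    have hprod : s * (2 * s ^ 5 / (s ^ 2 + 1) ^ 2) * (2 * s ^ 4 * (s ^ 2 + 5) / (s ^ 2 + 1) ^ 3)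
        = (2 * s ^ 5 / (s ^ 2 + 1) ^ 3) ^ 2 * ((s ^ 2 + 1) * (s ^ 2 + 5)) := by
      field_simp
    rw [hnum, hprod, Real.sqrt_mul (sq_nonneg _), Real.sqrt_sq hc.le]
    have hm : (0:ℝ) < (s ^ 2 + 1) * (s ^ 2 + 5) := by positivity
    have hsm : (0:ℝ) < Real.sqrt ((s ^ 2 + 1) * (s ^ 2 + 5)) := Real.sqrt_pos.2 hm
    rw [abs_of_pos (by positivity)]
    field_simp
    ring
  refine ⟨hmain, ?_⟩
  have himg : ((fun s => |s * deriv (deriv Φ) s - deriv Φ s|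
          / (2 * Real.sqrt (s * deriv Φ s * deriv (deriv Φ) s))) '' Set.Ioi 0)
      = (fun s : ℝ => 2 / Real.sqrt ((s ^ 2 + 1) * (s ^ 2 + 5))) '' Set.Ioi 0 :=
    Set.image_congr fun x hx => hmain x hx
  rw [himg]
  have h5 : (0:ℝ) < Real.sqrt 5 := Real.sqrt_pos.2 (by norm_num)
  apply csSup_eq_of_forall_le_of_forall_lt_exists_gt
  · exact ⟨_, ⟨1, by norm_num, rfl⟩⟩
  · rintro a ⟨s, hs, rfl⟩
    have hle : Real.sqrt 5 ≤ Real.sqrt ((s ^ 2 + 1) * (s ^ 2 + 5)) := by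
      apply Real.sqrt_le_sqrt; nlinarith [sq_nonneg s]
    exact div_le_div_of_nonneg_left (by norm_num) h5 hle
  · intro w hw
    have hcont : ContinuousAt (fun s : ℝ => 2 / Real.sqrt ((s ^ 2 + 1) * (s ^ 2 + 5))) 0 := by
      apply ContinuousAt.div continuousAt_const
      · exact Real.continuous_sqrt.continuousAt.comp (by fun_prop)
      · show Real.sqrt ((0 ^ 2 + 1) * (0 ^ 2 + 5)) ≠ 0
        positivity
    have hval : (fun s : ℝ => 2 / Real.sqrt ((s ^ 2 + 1) * (s ^ 2 + 5))) 0
        = 2 / Real.sqrt 5 := by norm_num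
    have htend : Tendsto (fun s : ℝ => 2 / Real.sqrt ((s ^ 2 + 1) * (s ^ 2 + 5)))
        (nhdsWithin 0 (Ioi 0)) (nhds (2 / Real.sqrt 5)) := by
      rw [← hval]
      exact hcont.continuousWithinAt.tendsto
    have hev : ∀ᶠ s in nhdsWithin (0:ℝ) (Ioi 0),
        w < 2 / Real.sqrt ((s ^ 2 + 1) * (s ^ 2 + 5)) :=
      htend.eventually (eventually_gt_nhds hw)
    obtain ⟨s, hws, hs⟩ := (hev.and self_mem_nhdsWithin).exists
    exact ⟨_, ⟨s, hs, rfl⟩, hws⟩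
end
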